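/- Let k be a field of prime characteristic p, S = k[x_1,…,x_N] the standard graded polynomial ring, and f_1,…,f_t a regular sequence of homogeneous polynomials of positive degree. Set R = S/(f_1,…,f_t) with homogeneous maximal ideal m, and let I ⊆ R be a homogeneous m-primary ideal. Let s = max{ r ∈ ℕ : m^r ⊄ I } and a = (deg f_1 + ⋯ + deg f_t) − N. Then for every q = p^e one has max{ r ∈ ℕ : m^r ⊄ I^{[q]} } ≥ (s − a)q + a. -/

import Mathlib

set_option synthInstance.maxHeartbeats 1000000
set_option maxHeartbeats 1000000

open MvPolynomial

/-- The `q`-th Frobenius power of an ideal: the ideal generated by the `q`-th powers of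
its elements. -/
noncomputable def frobPow {R : Type*} [CommRing R] (I : Ideal R) (q : ℕ) : Ideal R :=
  Ideal.span ((fun a => a ^ q) '' (I : Set R))

/-- `nu m J = max { r ∈ ℕ : m^r ⊄ J }`, the top socle degree of `R/J`. -/
noncomputable def nu {R : Type*} [CommRing R] (m J : Ideal R) : ℕ :=
  sSup {r : ℕ | ¬ m ^ r ≤ J}

namespace KVaux

variable {N : ℕ} {k : Type*} [Field k]

/-- sum of all coordinates -/
def dsum (β : Fin N →₀ ℕ) : ℕ := ∑ i, β i

lemma degree_eq_dsum (β : Fin N →₀ ℕ) : β.degree = dsum β := by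
  classical
  unfold Finsupp.degree dsum
  exact Finset.sum_subset (Finset.subset_univ _) (by
    intro i _ hi
    simpa [Finsupp.mem_support_iff] using (by simpa [Finsupp.mem_support_iff] using hi))

lemma dsum_add (β γ : Fin N →₀ ℕ) : dsum (β + γ) = dsum β + dsum γ := by
  unfold dsum
  simp [Finsupp.add_apply, Finset.sum_add_distrib]

/-- the irrelevant maximal ideal of the polynomial ring -/
noncomputable def mm (N : ℕ) (k : Type*) [Field k] : Ideal (MvPolynomial (Fin N) k) :=
  Ideal.span (Set.range X)

lemma prod_X_pow_mem (β : Fin N →₀ ℕ) (t : Finset (Fin N)) :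
    (∏ i ∈ t, (X i : MvPolynomial (Fin N) k) ^ β i) ∈ mm N k ^ (∑ i ∈ t, β i) := by
  classical
  induction t using Finset.induction_on with
  | empty => simp
  | @insert a tt hat ih =>
    rw [Finset.prod_insert hat, Finset.sum_insert hat, pow_add]
    have hXa : (X a : MvPolynomial (Fin N) k) ∈ mm N k :=
      Ideal.subset_span (Set.mem_range_self a)
    exact Ideal.mul_mem_mul (Ideal.pow_mem_pow hXa _) ih

lemma monomial_mem_mm_pow {β : Fin N →₀ ℕ} (c : k) {r : ℕ} (h : r ≤ β.degree) :
    monomial β c ∈ mm N k ^ r := by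
  have h1 : (monomial β c : MvPolynomial (Fin N) k)
      = C c * ∏ i ∈ β.support, (X i) ^ β i := by
    rw [monomial_eq]; rfl
  rw [h1]
  refine Ideal.mul_mem_left _ _ ?_
  have h2 := prod_X_pow_mem (k := k) β β.support
  have : β.degree = ∑ i ∈ β.support, β i := rfl
  exact Ideal.pow_le_pow_right h (by rwa [← this] at h2)

lemma mem_mm_pow {g : MvPolynomial (Fin N) k} {D r : ℕ}
    (hg : g.IsHomogeneous D) (h : r ≤ D) : g ∈ mm N k ^ r := by
  classical
  have h1 : g = ∑ β ∈ g.support, monomial β (coeff β g) :=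
    (support_sum_monomial_coeff g).symm
  rw [h1]
  refine Ideal.sum_mem _ ?_
  intro β hβ
  have hdeg : β.degree = D := by
    have := hg (show coeff β g ≠ 0 by simpa [Finsupp.mem_support_iff] using hβ)
    rw [Finsupp.degree_eq_weight_one]
    exact this
  exact monomial_mem_mm_pow _ (hdeg ▸ h)

/-- ideal of polynomials all of whose monomials have degree at least `r` -/
def lowBound (N : ℕ) (k : Type*) [Field k] (r : ℕ) : Ideal (MvPolynomial (Fin N) k) where
  carrier := {g | ∀ β ∈ g.support, r ≤ β.degree}
  add_mem' := by
    classical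
    intro a b ha hb β hβ
    have := MvPolynomial.support_add hβ
    rcases Finset.mem_union.1 this with h | h
    · exact ha β h
    · exact hb β h
  zero_mem' := by intro β hβ; simp at hβ
  smul_mem' := by
    classical
    intro c x hx β hβ
    rw [smul_eq_mul] at hβ
    have := MvPolynomial.support_mul c x hβ
    rcases Finset.mem_add.1 this with ⟨u, hu, v, hv, rfl⟩
    have := hx v hv
    rw [degree_eq_dsum, dsum_add]
    rw [degree_eq_dsum] at this
    omega

lemma mm_pow_le_lowBound (r : ℕ) : mm N k ^ r ≤ lowBound N k r := by
  induction r with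
  | zero => intro g _; intro β _; exact Nat.zero_le _
  | succ r ih =>
    rw [pow_succ]
    refine Ideal.mul_le.mpr ?_
    intro g hg x hx β hβ
    classical
    have hsupp := MvPolynomial.support_mul g x hβ
    rcases Finset.mem_add.1 hsupp with ⟨u, hu, v, hv, rfl⟩
    have h1 : r ≤ u.degree := ih hg u hu
    have h2 : 1 ≤ v.degree := by
      have : x ∈ lowBound N k 1 := by
        revert hx
        refine fun hx => ?_
        have : mm N k ≤ lowBound N k 1 := by
          rw [mm, Ideal.span_le]
          rintro _ ⟨i, rfl⟩ β hβ
          rw [MvPolynomial.support_X (R := k)] at hβ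
          simp at hβ
          subst hβ
          simp [degree_eq_dsum, dsum, Finsupp.single_apply]
        exact this hx
      exact this v hv
    rw [degree_eq_dsum, dsum_add]
    rw [degree_eq_dsum] at h1 h2
    omega

lemma mm_pow_le_span_monomials (r : ℕ) :
    mm N k ^ r ≤ Ideal.span {g | ∃ β : Fin N →₀ ℕ, β.degree = r ∧ g = monomial β 1} := by
  induction r with
  | zero =>
    have : (1 : MvPolynomial (Fin N) k) ∈
        Ideal.span {g | ∃ β : Fin N →₀ ℕ, β.degree = (0:ℕ) ∧ g = monomial β 1} := by
      refine Ideal.subset_span ⟨0, by simp, ?_⟩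
      simp [monomial_zero']
    intro g _
    simpa using Ideal.mul_mem_left _ g this
  | succ r ih =>
    have h1 : mm N k ^ (r+1) = mm N k * mm N k ^ r := by ring
    rw [h1]
    refine le_trans (Ideal.mul_mono le_rfl ih) ?_
    rw [mm, Ideal.span_mul_span']
    rw [Ideal.span_le]
    rintro _ ⟨_, ⟨i, rfl⟩, _, ⟨β, hβ, rfl⟩, rfl⟩
    refine Ideal.subset_span ⟨Finsupp.single i 1 + β, ?_, ?_⟩
    · have h2 : dsum (Finsupp.single i (1:ℕ)) = 1 := by
        simp [dsum, Finsupp.single_apply]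
      rw [degree_eq_dsum, dsum_add, h2, ← degree_eq_dsum β, hβ]
      omega
    · show X i * monomial β 1 = _
      rw [X, monomial_mul, one_mul]

lemma mm_pow_le_of_monomials {K : Ideal (MvPolynomial (Fin N) k)} {r : ℕ}
    (h : ∀ β : Fin N →₀ ℕ, β.degree = r → monomial β 1 ∈ K) : mm N k ^ r ≤ K := by
  refine le_trans (mm_pow_le_span_monomials r) ?_
  rw [Ideal.span_le]
  rintro _ ⟨β, hβ, rfl⟩
  exact h β hβ



/-- An ideal is "component-closed" if it contains all homogeneous components
of its members. -/
def HomId (K : Ideal (MvPolynomial (Fin N) k)) : Prop :=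
  ∀ g ∈ K, ∀ n, homogeneousComponent n g ∈ K

lemma comp_of_isHomogeneous {u : MvPolynomial (Fin N) k} {i n : ℕ}
    (hu : u.IsHomogeneous i) :
    homogeneousComponent n u = if n = i then u else 0 :=
  homogeneousComponent_of_mem ((mem_homogeneousSubmodule _ _).mpr hu)

lemma mul_comp (u : MvPolynomial (Fin N) k) {i : ℕ} (hu : u.IsHomogeneous i)
    (g : MvPolynomial (Fin N) k) (n : ℕ) :
    homogeneousComponent n (u * g) =
      if i ≤ n then u * homogeneousComponent (n - i) g else 0 := by
  classical
  conv_lhs => rw [← sum_homogeneousComponent g]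
  rw [Finset.mul_sum, map_sum]
  have hterm : ∀ j, homogeneousComponent n (u * homogeneousComponent j g)
      = if n = i + j then u * homogeneousComponent j g else 0 := by
    intro j
    exact comp_of_isHomogeneous (hu.mul (homogeneousComponent_isHomogeneous j g))
  rw [Finset.sum_congr rfl fun j _ => hterm j]
  by_cases hin : i ≤ n
  · rw [if_pos hin]
    rw [Finset.sum_eq_single (n - i)]
    · rw [if_pos (by omega)]
    · intro j _ hj
      rw [if_neg (by omega)]
    · intro hb
      have h0 : homogeneousComponent (n - i) g = 0 :=
        homogeneousComponent_eq_zero _ g (by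
          simp only [Finset.mem_range, not_lt] at hb; omega)
      rw [h0, mul_zero, ite_self]
  · rw [if_neg hin]
    refine Finset.sum_eq_zero ?_
    intro j _
    rw [if_neg (by omega)]


lemma homId_span {A : Set (MvPolynomial (Fin N) k)}
    (hA : ∀ g ∈ A, ∃ d, g.IsHomogeneous d) : HomId (Ideal.span A) := by
  intro g hg
  refine Submodule.span_induction ?_ ?_ ?_ ?_ hg
  · rintro x hx n
    obtain ⟨d, hd⟩ := hA x hx
    rw [comp_of_isHomogeneous hd]
    split
    · exact Ideal.subset_span hx
    · exact Ideal.zero_mem _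
  · intro n; rw [map_zero]; exact Ideal.zero_mem _
  · intro x y _ _ hx hy n
    rw [map_add]; exact Ideal.add_mem _ (hx n) (hy n)
  · intro r x _ hx n
    rw [smul_eq_mul]
    have hrx : homogeneousComponent n (r * x) =
        ∑ i ∈ Finset.range (r.totalDegree + 1),
          homogeneousComponent n (homogeneousComponent i r * x) := by
      conv_lhs => rw [← sum_homogeneousComponent r]
      rw [Finset.sum_mul, map_sum]
    rw [hrx]
    refine Ideal.sum_mem _ ?_
    intro i _
    rw [mul_comp _ (homogeneousComponent_isHomogeneous i r)]
    split
    · exact Ideal.mul_mem_left _ _ (hx _)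
    · exact Ideal.zero_mem _

lemma HomId.sup {K L : Ideal (MvPolynomial (Fin N) k)} (hK : HomId K) (hL : HomId L) :
    HomId (K ⊔ L) := by
  intro g hg n
  obtain ⟨x, hx, y, hy, rfl⟩ := Submodule.mem_sup.1 hg
  rw [map_add]
  exact Submodule.add_mem_sup (hK x hx n) (hL y hy n)

lemma HomId.colon {K : Ideal (MvPolynomial (Fin N) k)} (hK : HomId K)
    {f : MvPolynomial (Fin N) k} {d : ℕ} (hf : f.IsHomogeneous d) :
    HomId (K.colon (Ideal.span {f})) := by
  intro g hg n
  rw [Ideal.mem_colon_span_singleton] at hg ⊢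
  have h1 : homogeneousComponent n g * f = homogeneousComponent (n + d) (g * f) := by
    rw [mul_comm g f, mul_comp f hf, if_pos (by omega)]
    rw [Nat.add_sub_cancel, mul_comm]
  rw [h1]
  exact hK _ hg _

lemma comp_eq_zero_of_mem_mm_pow {v : MvPolynomial (Fin N) k} {T n : ℕ}
    (hv : v ∈ mm N k ^ T) (hn : n < T) : homogeneousComponent n v = 0 := by
  have hlow := mm_pow_le_lowBound T hv
  ext β
  rw [coeff_homogeneousComponent, coeff_zero]
  split
  · rename_i hb
    by_contra hc
    have : β ∈ v.support := by simpa [Finsupp.mem_support_iff] using hc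
    have := hlow β this
    omega
  · rfl

lemma exists_homog_witness {K : Ideal (MvPolynomial (Fin N) k)} (hK : HomId K) {T : ℕ}
    (h1 : ¬ mm N k ^ T ≤ K) (h2 : mm N k ^ (T+1) ≤ K) :
    ∃ z : MvPolynomial (Fin N) k, z.IsHomogeneous T ∧ z ∉ K := by
  obtain ⟨v, hvm, hvK⟩ := SetLike.not_le_iff_exists.1 h1
  refine ⟨homogeneousComponent T v, homogeneousComponent_isHomogeneous T v, ?_⟩
  intro hzK
  apply hvK
  rw [← sum_homogeneousComponent v]
  refine Ideal.sum_mem _ ?_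
  intro n _
  rcases lt_trichotomy n T with h | h | h
  · rw [comp_eq_zero_of_mem_mm_pow hvm h]; exact Ideal.zero_mem _
  · subst h; exact hzK
  · exact h2 (mem_mm_pow (homogeneousComponent_isHomogeneous n v) (by omega))


/-- Key lemma: adding one element `f` with `f^n ∈ K` to a homogeneous ideal `K`
drops the degree of a surviving homogeneous witness by at most `(n-1) * deg f`. -/
lemma drop {f : MvPolynomial (Fin N) k} {d : ℕ} (hf : f.IsHomogeneous d) :
    ∀ (n : ℕ) (K : Ideal (MvPolynomial (Fin N) k)), HomId K → f ^ n ∈ K →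
    ∀ (T : ℕ) (z : MvPolynomial (Fin N) k), z.IsHomogeneous T → z ∉ K →
    ∃ (T' : ℕ) (z' : MvPolynomial (Fin N) k), z'.IsHomogeneous T' ∧
      z' ∉ K ⊔ Ideal.span {f} ∧ T + d ≤ T' + n * d := by
  intro n
  induction n with
  | zero =>
    intro K _ hfK T z _ hzK
    rw [pow_zero] at hfK
    exact absurd ((Ideal.eq_top_iff_one K).2 hfK ▸ Submodule.mem_top) hzK
  | succ n ih =>
    intro K hK hfK T z hz hzK
    by_cases hmem : z ∈ K ⊔ Ideal.span {f}
    · -- descend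
      obtain ⟨x, hxK, y, hy, hzxy⟩ := Submodule.mem_sup.1 hmem
      obtain ⟨g, hgf⟩ := Ideal.mem_span_singleton'.1 hy
      have hzcomp : z = homogeneousComponent T x + homogeneousComponent T (g * f) := by
        conv_lhs => rw [show z = homogeneousComponent T z by
          rw [comp_of_isHomogeneous hz, if_pos rfl]]
        rw [← hzxy, map_add, ← hgf]
      by_cases hdT : d ≤ T
      · -- z' := component (T-d) of g survives in the colon ideal
        set z' := homogeneousComponent (T - d) g with hz'
        have hgf2 : homogeneousComponent T (g * f) = f * z' := by
          rw [mul_comm g f, mul_comp f hf, if_pos hdT]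
        have hz'K : z' ∉ K.colon (Ideal.span {f}) := by
          intro hcl
          rw [Ideal.mem_colon_span_singleton] at hcl
          apply hzK
          rw [hzcomp, hgf2]
          exact Ideal.add_mem _ (hK x hxK T) (by rwa [mul_comm] at hcl)
        have hfn : f ^ n ∈ K.colon (Ideal.span {f}) := by
          rw [Ideal.mem_colon_span_singleton, ← pow_succ]
          exact hfK
        obtain ⟨T'', z'', hhom, hnot, harith⟩ :=
          ih (K.colon (Ideal.span {f})) (hK.colon hf) hfn (T - d) z'
            (homogeneousComponent_isHomogeneous _ g) hz'K
        refine ⟨T'', z'', hhom, ?_, ?_⟩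
        · intro hmem'
          apply hnot
          have hle : K ⊔ Ideal.span {f} ≤ K.colon (Ideal.span {f}) ⊔ Ideal.span {f} := by
            refine sup_le_sup_right ?_ _
            intro u hu
            exact Ideal.mem_colon_span_singleton.2 (Ideal.mul_mem_right f K hu)
          exact hle hmem'
        · have hmul : (n + 1) * d = n * d + d := by ring
          omega
      · -- degree too small: contradiction
        exfalso
        apply hzK
        have hgf0 : homogeneousComponent T (g * f) = 0 := by
          rw [mul_comm g f, mul_comp f hf, if_neg hdT]
        rw [hzcomp, hgf0, add_zero]
        exact hK x hxK T
    · refine ⟨T, z, hz, hmem, ?_⟩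
      have : d ≤ (n + 1) * d := Nat.le_mul_of_pos_left d n.succ_pos
      omega




/-- A `σ`-semilinear additive retraction for an injective endomorphism of a field:
`τ 1 = 1`, `τ` additive, and `τ (σ c * d) = c * τ d`. -/
lemma exists_tau (σ : k →+* k) :
    ∃ τ : k → k, τ 1 = 1 ∧ (∀ x y, τ (x + y) = τ x + τ y) ∧
      (∀ c d, τ (σ c * d) = c * τ d) := by
  classical
  set F := σ.fieldRange with hF
  have hinj : Function.Injective σ := σ.injective
  -- the corestriction of σ onto its field range, as a ring equiv
  let σ' : k →+* F := σ.codRestrict F.toSubring (fun x => σ.mem_fieldRange_self x)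
  have hbij : Function.Bijective σ' := by
    constructor
    · intro a b hab
      exact hinj (congrArg Subtype.val hab)
    · rintro ⟨y, hy⟩
      obtain ⟨x, rfl⟩ := RingHom.mem_fieldRange.1 hy
      exact ⟨x, rfl⟩
  let e : k ≃+* F := RingEquiv.ofBijective σ' hbij
  -- a linear functional over F sending 1 to 1
  have hli : LinearIndepOn F id ({1} : Set k) :=
    LinearIndepOn.singleton one_ne_zero
  let b : Module.Basis _ F k := Module.Basis.extend hli
  have h1mem : (1 : k) ∈ hli.extend (Set.subset_univ _) :=
    hli.subset_extend _ (Set.mem_singleton 1)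
  let θ : k →ₗ[F] F := b.coord ⟨1, h1mem⟩
  refine ⟨fun d => e.symm (θ d), ?_, ?_, ?_⟩
  · show e.symm (θ 1) = 1
    have hb1 : b ⟨1, h1mem⟩ = 1 := Module.Basis.extend_apply_self hli ⟨1, h1mem⟩
    have hθ : θ 1 = 1 := by
      rw [← hb1]
      simp [θ, Module.Basis.coord_apply, Module.Basis.repr_self]
    rw [hθ, map_one]
  · intro x y
    show e.symm (θ (x + y)) = e.symm (θ x) + e.symm (θ y)
    rw [map_add, map_add]
  · intro c d
    show e.symm (θ (σ c * d)) = c * e.symm (θ d)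
    have h1 : σ c * d = (e c) • d := by
      rw [Algebra.smul_def]
      rfl
    rw [h1, map_smul, smul_eq_mul, map_mul]
    congr 1
    exact e.symm_apply_apply c


lemma emb_injective (q : ℕ) (hq : 0 < q) (ρ : Fin N →₀ ℕ) :
    Function.Injective (fun γ : Fin N →₀ ℕ => q • γ + ρ) := by
  intro γ₁ γ₂ h
  ext i
  have := congrArg (fun β : Fin N →₀ ℕ => β i) h
  simp only [Finsupp.add_apply, Finsupp.smul_apply, smul_eq_mul] at this
  have h2 : q * γ₁ i = q * γ₂ i := by omega
  exact Nat.eq_of_mul_eq_mul_left hq h2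

noncomputable def psi (τ : k → k) (hτ0 : τ 0 = 0) (q : ℕ) (hq : 0 < q)
    (ρ : Fin N →₀ ℕ) (g : MvPolynomial (Fin N) k) : MvPolynomial (Fin N) k :=
  Finsupp.mapRange τ hτ0
    (Finsupp.comapDomain (fun γ : Fin N →₀ ℕ => q • γ + ρ) (AddMonoidAlgebra.coeff g)
      ((emb_injective q hq ρ).injOn)) |> AddMonoidAlgebra.ofCoeff

lemma coeff_psi (τ : k → k) (hτ0 : τ 0 = 0) (q : ℕ) (hq : 0 < q)
    (ρ : Fin N →₀ ℕ) (g : MvPolynomial (Fin N) k) (γ : Fin N →₀ ℕ) :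
    coeff γ (psi τ hτ0 q hq ρ g) = τ (coeff (q • γ + ρ) g) := rfl

lemma coord_key {q a b c r : ℕ} (hr : r < q) (h : q * a + b = q * c + r) :
    a ≤ c ∧ b = q * (c - a) + r := by
  have hac : a ≤ c := by
    by_contra hlt
    push_neg at hlt
    obtain ⟨d, rfl⟩ := Nat.exists_eq_add_of_lt hlt
    rw [show q * (c + d + 1) = q * c + q * d + q by ring] at h
    omega
  obtain ⟨d, rfl⟩ := Nat.exists_eq_add_of_le hac
  refine ⟨hac, ?_⟩
  rw [mul_add] at h
  rw [show a + d - a = d from by omega]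
  omega

lemma coord_key2 {q a b c r : ℕ} (h : a ≤ c) (hb : b = q * (c - a) + r) :
    q * a + b = q * c + r := by
  obtain ⟨d, rfl⟩ := Nat.exists_eq_add_of_le h
  rw [Nat.add_sub_cancel_left] at hb
  rw [hb, mul_add]
  omega

section key
variable (τ : k → k) (hτ0 : τ 0 = 0) (q : ℕ) (hq : 0 < q) (ρ : Fin N →₀ ℕ)

lemma psi_add (hτadd : ∀ x y : k, τ (x + y) = τ x + τ y)
    (g₁ g₂ : MvPolynomial (Fin N) k) :
    psi τ hτ0 q hq ρ (g₁ + g₂) = psi τ hτ0 q hq ρ g₁ + psi τ hτ0 q hq ρ g₂ := by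
  ext γ
  rw [coeff_add, coeff_psi, coeff_psi, coeff_psi, coeff_add, hτadd]

lemma key_monomial (hρ : ∀ i, ρ i < q) (hτq : ∀ c d : k, τ (c ^ q * d) = c * τ d)
    (δ β : Fin N →₀ ℕ) (c₁ c₂ : k) :
    psi τ hτ0 q hq ρ ((monomial δ c₁) ^ q * monomial β c₂)
      = monomial δ c₁ * psi τ hτ0 q hq ρ (monomial β c₂) := by
  classical
  rw [monomial_pow, monomial_mul]
  ext γ
  rw [coeff_psi, coeff_monomial_mul', coeff_monomial]
  by_cases h1 : q • δ + β = q • γ + ρ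
  · have hco : ∀ i, δ i ≤ γ i ∧ β i = q * (γ i - δ i) + ρ i := by
      intro i
      have := congrArg (fun β : Fin N →₀ ℕ => β i) h1
      simp only [Finsupp.add_apply, Finsupp.smul_apply, smul_eq_mul] at this
      exact coord_key (hρ i) this
    have hle : δ ≤ γ := by
      intro i; exact (hco i).1
    have hβ : β = q • (γ - δ) + ρ := by
      ext i
      simp only [Finsupp.add_apply, Finsupp.smul_apply, smul_eq_mul, Finsupp.tsub_apply]
      exact (hco i).2
    rw [if_pos h1, if_pos hle, coeff_psi, coeff_monomial, if_pos hβ, hτq]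
  · rw [if_neg h1]
    by_cases h2 : δ ≤ γ
    · rw [if_pos h2, coeff_psi, coeff_monomial, if_neg, hτ0, mul_zero]
      intro hβ
      apply h1
      ext i
      have hβi := congrArg (fun β : Fin N →₀ ℕ => β i) hβ.symm
      simp only [Finsupp.add_apply, Finsupp.smul_apply, smul_eq_mul,
        Finsupp.tsub_apply] at hβi
      simp only [Finsupp.add_apply, Finsupp.smul_apply, smul_eq_mul]
      exact coord_key2 (h2 i) hβi.symm
    · rw [if_neg h2, hτ0]


lemma psi_zero : psi τ hτ0 q hq ρ 0 = 0 := by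
  ext γ
  rw [coeff_psi, coeff_zero, hτ0, coeff_zero]

end key

section charkey
variable {p : ℕ} [CharP k p]

lemma key (hp : p.Prime) (e : ℕ) (τ : k → k) (hτ0 : τ 0 = 0)
    (hq : 0 < p ^ e) (ρ : Fin N →₀ ℕ) (hρ : ∀ i, ρ i < p ^ e)
    (hτq : ∀ c d : k, τ (c ^ p ^ e * d) = c * τ d)
    (hτadd : ∀ x y : k, τ (x + y) = τ x + τ y) :
    ∀ a h : MvPolynomial (Fin N) k,
      psi τ hτ0 (p ^ e) hq ρ (a ^ p ^ e * h) = a * psi τ hτ0 (p ^ e) hq ρ h := by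
  haveI : Fact p.Prime := ⟨hp⟩
  intro a
  induction a using MvPolynomial.induction_on' with
  | monomial u c =>
    intro h
    induction h using MvPolynomial.induction_on' with
    | monomial v d => exact key_monomial τ hτ0 (p ^ e) hq ρ hρ hτq u v c d
    | add h₁ h₂ ih₁ ih₂ =>
      rw [mul_add, psi_add τ hτ0 (p ^ e) hq ρ hτadd, ih₁, ih₂,
        psi_add τ hτ0 (p ^ e) hq ρ hτadd, mul_add]
  | add a₁ a₂ ih₁ ih₂ =>
    intro h
    rw [add_pow_char_pow, add_mul, psi_add τ hτ0 (p ^ e) hq ρ hτadd, ih₁, ih₂, add_mul]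

/-- The Frobenius retraction: if `z^q * x^ρ` lies in the ideal generated by `q`-th
powers of elements of `J`, then `z ∈ J`.  (`ρ` has all entries `< q`.) -/
lemma frob_retract (hp : p.Prime) (e : ℕ) (J : Ideal (MvPolynomial (Fin N) k))
    (ρ : Fin N →₀ ℕ) (hρ : ∀ i, ρ i < p ^ e) (z : MvPolynomial (Fin N) k)
    (hmem : z ^ p ^ e * monomial ρ 1 ∈
      Ideal.span ((fun a => a ^ p ^ e) '' (J : Set (MvPolynomial (Fin N) k)))) :
    z ∈ J := by
  haveI : Fact p.Prime := ⟨hp⟩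
  have hq : 0 < p ^ e := pow_pos hp.pos e
  obtain ⟨τ, hτ1, hτadd, hτσ⟩ := exists_tau (iterateFrobenius k p e)
  have hτq : ∀ c d : k, τ (c ^ p ^ e * d) = c * τ d := by
    intro c d
    have : (c : k) ^ p ^ e = iterateFrobenius k p e c := rfl
    rw [this, hτσ]
  have hτ0 : τ 0 = 0 := by
    have h := hτadd 0 0
    rw [add_zero] at h
    have h2 : τ 0 + τ 0 = τ 0 + 0 := by rw [add_zero]; exact h.symm
    exact add_left_cancel h2
  -- main claim by span induction
  have main : ∀ w ∈ Ideal.span ((fun a => a ^ p ^ e) '' (J : Set (MvPolynomial (Fin N) k))),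
      ∀ h : MvPolynomial (Fin N) k, psi τ hτ0 (p ^ e) hq ρ (h * w) ∈ J := by
    intro w hw
    refine Submodule.span_induction ?_ ?_ ?_ ?_ hw
    · rintro _ ⟨b, hb, rfl⟩ h
      rw [mul_comm, key hp e τ hτ0 hq ρ hρ hτq hτadd]
      exact Ideal.mul_mem_right _ _ hb
    · intro h
      rw [mul_zero, psi_zero]
      exact Ideal.zero_mem _
    · intro x y _ _ hx hy h
      rw [mul_add, psi_add τ hτ0 (p ^ e) hq ρ hτadd]
      exact Ideal.add_mem _ (hx h) (hy h)
    · intro r x _ hx h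
      rw [smul_eq_mul, show h * (r * x) = (h * r) * x from by ring]
      exact hx (h * r)
  have hpsi1 : psi τ hτ0 (p ^ e) hq ρ (monomial ρ (1 : k)) = 1 := by
    classical
    ext γ
    rw [coeff_psi, coeff_monomial, coeff_one]
    by_cases hγ : (0 : Fin N →₀ ℕ) = γ
    · rw [if_pos hγ, if_pos, hτ1]
      ext i
      simp only [Finsupp.add_apply, Finsupp.smul_apply, smul_eq_mul, ← hγ]
      simp
    · rw [if_neg hγ, if_neg, hτ0]
      intro hc
      apply hγ
      have : ∀ i, ρ i = p ^ e * γ i + ρ i := by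
        intro i
        have := congrArg (fun β : Fin N →₀ ℕ => β i) hc
        simpa [Finsupp.add_apply, Finsupp.smul_apply, smul_eq_mul] using this
      ext i
      have h2 := this i
      have h3 : p ^ e * γ i = 0 := by omega
      simp only [Finsupp.coe_zero, Pi.zero_apply]
      exact ((Nat.mul_eq_zero.1 h3).resolve_left (by omega)).symm
  have := main _ hmem 1
  rw [one_mul, key hp e τ hτ0 hq ρ hρ hτq hτadd, hpsi1, mul_one] at this
  exact this

end charkey

lemma span_pow_image {p : ℕ} [CharP k p] (hp : p.Prime) (e : ℕ)
    (A : Set (MvPolynomial (Fin N) k)) :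
    Ideal.span ((fun a => a ^ p ^ e) '' ((Ideal.span A : Ideal (MvPolynomial (Fin N) k)) :
        Set (MvPolynomial (Fin N) k)))
      = Ideal.span ((fun a => a ^ p ^ e) '' A) := by
  haveI : Fact p.Prime := ⟨hp⟩
  apply le_antisymm
  · rw [Ideal.span_le]
    rintro _ ⟨b, hb, rfl⟩
    have : ∀ x ∈ Ideal.span A, (x : MvPolynomial (Fin N) k) ^ p ^ e ∈
        Ideal.span ((fun a => a ^ p ^ e) '' A) := by
      intro x hx
      refine Submodule.span_induction ?_ ?_ ?_ ?_ hx
      · intro y hy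
        exact Ideal.subset_span ⟨y, hy, rfl⟩
      · rw [zero_pow (pow_pos hp.pos e).ne']
        exact Ideal.zero_mem _
      · intro u v _ _ hu hv
        rw [add_pow_char_pow]
        exact Ideal.add_mem _ hu hv
      · intro r u _ hu
        rw [smul_eq_mul, mul_pow]
        exact Ideal.mul_mem_left _ _ hu
    exact this b hb
  · exact Ideal.span_mono (Set.image_mono Ideal.subset_span)

end KVaux

/-- **Kustin–Vraciu lower bound for top socle degrees of Frobenius powers (complete
intersection case).**  For `R = k[x_1,…,x_N]/(f_1,…,f_t)` a graded complete intersection,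
`I ⊆ R` a homogeneous `m`-primary ideal, `s = max { r : m^r ⊄ I }` and
`a = (Σ deg f_i) − N` the `a`-invariant, one has for every `q = p^e`:
`max { r : m^r ⊄ I^{[q]} } ≥ (s − a)q + a`. -/
theorem kustinVraciu_top_socle_degree_lower_bound
    (p : ℕ) (hp : p.Prime) (k : Type*) [Field k] [CharP k p]
    (N t : ℕ) (f : Fin t → MvPolynomial (Fin N) k) (df : Fin t → ℕ)
    (hdfpos : ∀ i, 0 < df i)
    (hfhom : ∀ i, (f i).IsHomogeneous (df i))
    -- `f` is a regular sequence: each `f i` is a nonzerodivisor modulo its predecessors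
    (hreg : ∀ (i : Fin t) (g : MvPolynomial (Fin N) k),
        g * f i ∈ Ideal.span (f '' {j | j < i}) → g ∈ Ideal.span (f '' {j | j < i}))
    (C : Ideal (MvPolynomial (Fin N) k)) (hC : C = Ideal.span (Set.range f))
    (I : Ideal (MvPolynomial (Fin N) k ⧸ C))
    -- `I` is homogeneous: generated by images of homogeneous polynomials
    (hIhom : ∃ G : Set (MvPolynomial (Fin N) k),
        (∀ g ∈ G, ∃ d : ℕ, g.IsHomogeneous d) ∧
        I = (Ideal.span G).map (Ideal.Quotient.mk C))
    -- `I` is `m`-primary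
    (hIproper : I ≠ ⊤)
    (hIprimary : ∃ K : ℕ,
        ((Ideal.span (Set.range (X : Fin N → MvPolynomial (Fin N) k))).map
            (Ideal.Quotient.mk C)) ^ K ≤ I)
    (s : ℕ)
    (hs : s = nu ((Ideal.span (Set.range (X : Fin N → MvPolynomial (Fin N) k))).map
        (Ideal.Quotient.mk C)) I)
    (a : ℤ) (ha : a = (∑ i : Fin t, (df i : ℤ)) - N) :
    ∀ e : ℕ,
      ((s : ℤ) - a) * (p ^ e : ℕ) + a ≤
        (nu ((Ideal.span (Set.range (X : Fin N → MvPolynomial (Fin N) k))).map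
            (Ideal.Quotient.mk C)) (frobPow I (p ^ e)) : ℤ) := by
  intro e
  classical
  haveI : Fact p.Prime := ⟨hp⟩
  set q : ℕ := p ^ e with hqdef
  have hq : 0 < q := pow_pos hp.pos e
  set π := Ideal.Quotient.mk C with hπ
  have hsurj : Function.Surjective π := Ideal.Quotient.mk_surjective
  set M : Ideal (MvPolynomial (Fin N) k) :=
    Ideal.span (Set.range (X : Fin N → MvPolynomial (Fin N) k)) with hM
  set J : Ideal (MvPolynomial (Fin N) k) := Ideal.comap π I with hJdef
  obtain ⟨G, hGhom, hIG⟩ := hIhom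
  have hkerπ : RingHom.ker π = C := Ideal.mk_ker
  have hJ : J = Ideal.span (G ∪ Set.range f) := by
    rw [hJdef, hIG, Ideal.comap_map_of_surjective π hsurj,
      ← RingHom.ker_eq_comap_bot, hkerπ, hC, Ideal.span_union]
  have hIJ : I = Ideal.map π J := (Ideal.map_comap_of_surjective π hsurj I).symm
  have htrans : ∀ (r : ℕ) (Q : Ideal (MvPolynomial (Fin N) k ⧸ C)),
      ((M.map π) ^ r ≤ Q ↔ M ^ r ≤ Q.comap π) := by
    intro r Q
    rw [← Ideal.map_pow, Ideal.map_le_iff_le_comap]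
  obtain ⟨K₀, hK₀⟩ := hIprimary
  have hK₀S : M ^ K₀ ≤ J := (htrans K₀ I).1 hK₀
  have hsetS : {r : ℕ | ¬ (M.map π) ^ r ≤ I} = {r : ℕ | ¬ M ^ r ≤ J} := by
    ext r
    simp only [Set.mem_setOf_eq]
    rw [htrans r I, ← hJdef]
  have hbddS : ∀ r ∈ {r : ℕ | ¬ M ^ r ≤ J}, r ≤ K₀ := by
    intro r hr
    by_contra hgt
    exact hr (le_trans (Ideal.pow_le_pow_right (by omega)) hK₀S)
  have hne : (0 : ℕ) ∈ {r : ℕ | ¬ M ^ r ≤ J} := by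
    simp only [Set.mem_setOf_eq, pow_zero, Ideal.one_eq_top, top_le_iff]
    intro hJtop
    apply hIproper
    rw [hIJ, hJtop, Ideal.map_top]
  have hsS : s = sSup {r : ℕ | ¬ M ^ r ≤ J} := by
    rw [hs]
    show sSup {r : ℕ | ¬ (M.map π) ^ r ≤ I} = _
    rw [hsetS]
  have hss : ¬ M ^ s ≤ J := by
    have hmem := Nat.sSup_mem ⟨0, hne⟩ ⟨K₀, fun r hr => hbddS r hr⟩
    rwa [← hsS] at hmem
  have hs1 : M ^ (s + 1) ≤ J := by
    by_contra hcon
    have h2 : s + 1 ≤ s := by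
      conv_rhs => rw [hsS]
      exact le_csSup ⟨K₀, fun r hr => hbddS r hr⟩ hcon
    omega
  have hGfhom : ∀ g ∈ G ∪ Set.range f, ∃ d, MvPolynomial.IsHomogeneous g d := by
    rintro g (hg | ⟨i, rfl⟩)
    · exact hGhom g hg
    · exact ⟨df i, hfhom i⟩
  have hJhom : KVaux.HomId J := by
    rw [hJ]; exact KVaux.homId_span hGfhom
  obtain ⟨z, hzhom, hzJ⟩ := KVaux.exists_homog_witness hJhom hss hs1
  set Jq : Ideal (MvPolynomial (Fin N) k) :=
    Ideal.span ((fun a => a ^ q) '' (J : Set (MvPolynomial (Fin N) k))) with hJqdef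
  have hJqGen : Jq = Ideal.span ((fun a => a ^ q) '' (G ∪ Set.range f)) := by
    rw [hJqdef, hJ, hqdef, KVaux.span_pow_image hp e]
  have hJqhom : KVaux.HomId Jq := by
    rw [hJqGen]
    apply KVaux.homId_span
    rintro _ ⟨g, hg, rfl⟩
    obtain ⟨d, hd⟩ := hGfhom g hg
    exact ⟨d * q, hd.pow q⟩
  -- the witness in degree s*q + N*(q-1)
  set ρ : Fin N →₀ ℕ := Finsupp.equivFunOnFinite.symm (fun _ : Fin N => q - 1) with hρdef
  have hρap : ∀ i, ρ i = q - 1 := by intro i; simp [hρdef]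
  have hρlt : ∀ i, ρ i < q := fun i => by rw [hρap i]; omega
  have hρdeg : ρ.degree = N * (q - 1) := by
    rw [KVaux.degree_eq_dsum]
    unfold KVaux.dsum
    simp [hρap, Finset.sum_const, mul_comm]
  set w₀ := z ^ q * MvPolynomial.monomial ρ (1 : k) with hw₀
  have hw₀hom : w₀.IsHomogeneous (s * q + N * (q - 1)) :=
    (hzhom.pow q).mul (isHomogeneous_monomial 1 hρdeg)
  have hw₀Jq : w₀ ∉ Jq := by
    intro hcon
    refine hzJ (KVaux.frob_retract hp e J ρ (by rw [← hqdef]; exact hρlt) z ?_)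
    rw [← hqdef]
    exact hcon
  have hfJ : ∀ j : Fin t, f j ∈ J := by
    intro j
    rw [hJ]
    exact Ideal.subset_span (Set.mem_union_right _ ⟨j, rfl⟩)
  -- iterated drop
  have hiter : ∀ F : Finset (Fin t), ∃ (T' : ℕ) (z' : MvPolynomial (Fin N) k),
      z'.IsHomogeneous T' ∧ z' ∉ Jq ⊔ Ideal.span (f '' ↑F) ∧
      (s * q + N * (q - 1)) + ∑ j ∈ F, df j ≤ T' + ∑ j ∈ F, q * df j := by
    intro F
    induction F using Finset.induction_on with
    | empty =>
      refine ⟨_, w₀, hw₀hom, ?_, by simp⟩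
      simpa using hw₀Jq
    | @insert j F hjF ih =>
      obtain ⟨T', z', hz'hom, hz'not, harith⟩ := ih
      have hK : KVaux.HomId (Jq ⊔ Ideal.span (f '' ↑F)) :=
        hJqhom.sup (KVaux.homId_span (by rintro _ ⟨i, _, rfl⟩; exact ⟨df i, hfhom i⟩))
      have hfq : f j ^ q ∈ Jq ⊔ Ideal.span (f '' ↑F) :=
        Ideal.mem_sup_left (Ideal.subset_span ⟨f j, hfJ j, rfl⟩)
      obtain ⟨T'', z'', h1, h2, h3⟩ :=
        KVaux.drop (hfhom j) q _ hK hfq T' z' hz'hom hz'not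
      refine ⟨T'', z'', h1, ?_, ?_⟩
      · have hrw : Jq ⊔ Ideal.span (f '' ↑(insert j F))
            = (Jq ⊔ Ideal.span (f '' ↑F)) ⊔ Ideal.span {f j} := by
          rw [Finset.coe_insert, Set.image_insert_eq, Ideal.span_insert,
            sup_comm (Ideal.span {f j}) (Ideal.span (f '' ↑F)), ← sup_assoc]
        rw [hrw]
        exact h2
      · rw [Finset.sum_insert hjF, Finset.sum_insert hjF]
        omega
  obtain ⟨Tstar, zstar, hzshom, hzsnot, hzsineq⟩ := hiter Finset.univ
  have hunivC : Ideal.span (f '' ↑(Finset.univ : Finset (Fin t))) = C := by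
    rw [Finset.coe_univ, Set.image_univ, hC]
  rw [hunivC] at hzsnot
  -- identify the Frobenius power downstairs
  have hfrob : frobPow I q = Ideal.map π Jq := by
    have hIset : (I : Set (MvPolynomial (Fin N) k ⧸ C))
        = π '' (J : Set (MvPolynomial (Fin N) k)) := by
      ext x
      constructor
      · intro hx
        have hx2 : x ∈ Ideal.map π J := hIJ ▸ hx
        obtain ⟨y, hy, rfl⟩ := (Ideal.mem_map_iff_of_surjective π hsurj).1 hx2
        exact ⟨y, hy, rfl⟩
      · rintro ⟨y, hy, rfl⟩
        rw [hIJ]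
        exact Ideal.mem_map_of_mem π hy
    rw [frobPow, hIset, Set.image_image]
    have hcomm : (fun a => (π a) ^ q) = fun a => π (a ^ q) := by
      funext a; rw [map_pow]
    rw [hcomm, hJqdef, Ideal.map_span, Set.image_image]
  have hcomap : Ideal.comap π (frobPow I q) = Jq ⊔ C := by
    rw [hfrob, Ideal.comap_map_of_surjective π hsurj, ← RingHom.ker_eq_comap_bot, hkerπ]
  have hTmem : ¬ (M.map π) ^ Tstar ≤ frobPow I q := by
    intro hcon
    rw [htrans Tstar (frobPow I q), hcomap] at hcon
    exact hzsnot (hcon (KVaux.mem_mm_pow hzshom le_rfl))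
  -- boundedness of the relevant set
  set R₁ : ℕ := q * K₀ + N * (q - 1) with hR₁
  have hbig : M ^ R₁ ≤ Jq := by
    apply KVaux.mm_pow_le_of_monomials
    intro β hβ
    set γ : Fin N →₀ ℕ := Finsupp.mapRange (· / q) (Nat.zero_div q) β with hγdef
    have hγap : ∀ i, γ i = β i / q := fun i => rfl
    have hpt : ∀ i, q * γ i ≤ β i ∧ β i ≤ q * γ i + (q - 1) := by
      intro i
      rw [hγap i]
      have h1 := Nat.div_add_mod (β i) q
      have h2 := Nat.mod_lt (β i) hq
      omega
    have hsplit : MvPolynomial.monomial β (1 : k)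
        = MvPolynomial.monomial (β - q • γ) 1 * (MvPolynomial.monomial γ 1) ^ q := by
      have hidx : β - q • γ + q • γ = β := by
        ext i
        simp only [Finsupp.add_apply, Finsupp.tsub_apply, Finsupp.smul_apply, smul_eq_mul]
        have := hpt i
        omega
      rw [monomial_pow, one_pow, monomial_mul, one_mul, hidx]
    have hγdeg : K₀ ≤ γ.degree := by
      rw [KVaux.degree_eq_dsum]
      have hsum : KVaux.dsum β ≤ q * KVaux.dsum γ + N * (q - 1) := by
        unfold KVaux.dsum
        rw [Finset.mul_sum]
        calc ∑ i, β i ≤ ∑ i, (q * γ i + (q - 1)) :=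
              Finset.sum_le_sum (fun i _ => (hpt i).2)
          _ = (∑ i, q * γ i) + N * (q - 1) := by
              rw [Finset.sum_add_distrib, Finset.sum_const, Finset.card_univ,
                Fintype.card_fin, smul_eq_mul]
          _ = _ := by ring
      rw [KVaux.degree_eq_dsum, hβ, hR₁] at *
      have : q * K₀ ≤ q * KVaux.dsum γ := by omega
      exact Nat.le_of_mul_le_mul_left this hq
    have hmemJ : MvPolynomial.monomial γ (1 : k) ∈ J :=
      hK₀S (KVaux.monomial_mem_mm_pow 1 hγdeg)
    rw [hsplit]
    exact Ideal.mul_mem_left _ _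
      (Ideal.subset_span ⟨MvPolynomial.monomial γ 1, hmemJ, rfl⟩)
  have hbddF : ∀ r ∈ {r : ℕ | ¬ (M.map π) ^ r ≤ frobPow I q}, r ≤ R₁ := by
    intro r hr
    by_contra hgt
    apply hr
    rw [htrans r (frobPow I q), hcomap]
    calc M ^ r ≤ M ^ R₁ := Ideal.pow_le_pow_right (by omega)
      _ ≤ Jq := hbig
      _ ≤ Jq ⊔ C := le_sup_left
  have hnuge : Tstar ≤ nu (M.map π) (frobPow I q) := by
    have : Tstar ∈ {r : ℕ | ¬ (M.map π) ^ r ≤ frobPow I q} := hTmem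
    exact le_csSup ⟨R₁, fun r hr => hbddF r hr⟩ this
  -- final arithmetic
  have hqcast : ((q - 1 : ℕ) : ℤ) = (q : ℤ) - 1 := by
    rw [Nat.cast_sub (by omega : 1 ≤ q)]
    norm_num
  have hsumdf : (∑ j : Fin t, q * df j : ℕ) = q * ∑ j : Fin t, df j := by
    rw [Finset.mul_sum]
  rw [hsumdf] at hzsineq
  have hZ1 : (Tstar : ℤ) ≤ (nu (M.map π) (frobPow I q) : ℤ) := by exact_mod_cast hnuge
  have hZ2 : ((s : ℤ) * q + N * ((q : ℤ) - 1)) + (∑ j : Fin t, (df j : ℤ))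
      ≤ (Tstar : ℤ) + q * (∑ j : Fin t, (df j : ℤ)) := by
    have := hzsineq
    zify at this
    rw [hqcast] at this
    push_cast at this ⊢
    linarith only [this]
  rw [ha]
  have hq1 : (1 : ℤ) ≤ (q : ℤ) := by exact_mod_cast hq
  push_cast
  linarith only [hZ1, hZ2, hq1]
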